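/- arXiv:2102.09434 — 2 statements merged into one kernel-verified Lean document; each statement's English description precedes it below -/
import Mathlib

section
/- With the notation of the MFG fixed-point map, suppose r̃ : [0,T] → ℝⁿ is given, X̃ solves dX̃_t/dt = (A − BR⁻¹Bᵀη_t)X̃_t − BR⁻¹Bᵀr̃_t with X̃₀ = 0, and r̃' solves the terminal-value ODE dr̃'_t/dt = (η_tBR⁻¹Bᵀ − Aᵀ)r̃_t − FᵀX̃_t, r̃'_T = 0. Then sup_{0≤t≤T}‖r̃'_t‖² ≤ c_T · sup_{0≤t≤T}‖r̃_t‖², where c_T = T·exp(T(‖A‖ + ‖BR⁻¹Bᵀ‖‖η‖_T + ‖Fᵀ‖))·(‖Aᵀ‖ + (‖η‖_T + T‖Fᵀ‖·exp(T(2‖A‖ + (2‖η‖_T + 1)‖BR⁻¹Bᵀ‖)))·‖BR⁻¹Bᵀ‖). Moreover c_T → 0 as T → 0. -/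
open MeasureTheory Filter

noncomputable section

/-- The rank-one operator `B R⁻¹ Bᵀ` built from the column vector `b` and the scalar `R`. -/
def Kop {n : ℕ} (R : ℝ) (b : EuclideanSpace ℝ (Fin n)) :
    EuclideanSpace ℝ (Fin n) →L[ℝ] EuclideanSpace ℝ (Fin n) :=
  R⁻¹ • ((innerSL ℝ b).smulRight b)

/-- The contraction constant `c_T` of the MFG fixed-point map:
`c_T = T e^{T(‖A‖+‖K‖‖η‖_T+‖Fᵀ‖)} (‖Aᵀ‖ + (‖η‖_T + T‖Fᵀ‖ e^{T(2‖A‖+(2‖η‖_T+1)‖K‖)})‖K‖)`. -/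
def cT (T nA nAt nK nEta nFt : ℝ) : ℝ :=
  T * Real.exp (T * (nA + nK * nEta + nFt)) *
    (nAt + (nEta + T * nFt * Real.exp (T * (2 * nA + (2 * nEta + 1) * nK))) * nK)

lemma gb_le {K ε x T : ℝ} (hK : 0 ≤ K) (hε : 0 ≤ ε) (hx : 0 ≤ x) (hxT : x ≤ T) :
    gronwallBound 0 K ε x ≤ ε * T * Real.exp (K * T) := by
  have hT : 0 ≤ T := hx.trans hxT
  have hexpT : 1 ≤ Real.exp (K * T) := Real.one_le_exp (by positivity)
  have hmono : Real.exp (K * x) ≤ Real.exp (K * T) :=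
    Real.exp_le_exp.2 (by nlinarith)
  rcases eq_or_lt_of_le hK with h | h
  · rw [gronwallBound, if_pos h.symm]
    nlinarith [mul_le_mul_of_nonneg_left hxT hε, mul_nonneg hε hT]
  · rw [gronwallBound, if_neg (ne_of_gt h)]
    have h1 : Real.exp (K * x) - 1 ≤ K * x * Real.exp (K * x) := by
      set y := K * x with hy
      have h3 := Real.add_one_le_exp (-y)
      rw [Real.exp_neg] at h3
      have h4 := mul_le_mul_of_nonneg_right h3 (Real.exp_pos y).le
      rw [inv_mul_cancel₀ (ne_of_gt (Real.exp_pos y))] at h4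
      nlinarith
    have h2 : ε / K * (Real.exp (K * x) - 1) ≤ ε * x * Real.exp (K * x) := by
      have := mul_le_mul_of_nonneg_left h1 (div_nonneg hε h.le)
      calc ε / K * (Real.exp (K * x) - 1) ≤ ε / K * (K * x * Real.exp (K * x)) := this
        _ = ε * x * Real.exp (K * x) := by field_simp
    have h5 : ε * x * Real.exp (K * x) ≤ ε * T * Real.exp (K * T) := by
      have e1 := (Real.exp_pos (K * x)).le
      nlinarith [mul_le_mul_of_nonneg_left hxT hε,
        mul_le_mul_of_nonneg_left hmono (mul_nonneg hε hT)]
    nlinarith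

lemma gronwall_sq {E : Type*} [NormedAddCommGroup E] [InnerProductSpace ℝ E]
    {f d : ℝ → E} {T K ε : ℝ} (hT : 0 ≤ T) (hK : 0 ≤ K) (hε : 0 ≤ ε)
    (hder : ∀ t ∈ Set.Icc (0:ℝ) T, HasDerivAt f (d t) t)
    (h0 : f 0 = 0)
    (hbound : ∀ t ∈ Set.Icc (0:ℝ) T, 2 * ‖f t‖ * ‖d t‖ ≤ K * ‖f t‖ ^ 2 + ε) :
    ∀ t ∈ Set.Icc (0:ℝ) T, ‖f t‖ ^ 2 ≤ ε * T * Real.exp (K * T) := by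
  intro t ht
  have key := norm_le_gronwallBound_of_norm_deriv_right_le
    (f := fun s => ‖f s‖ ^ 2) (f' := fun s => 2 * (inner ℝ (f s) (d s) : ℝ))
    (δ := 0) (K := K) (ε := ε) (a := 0) (b := T)
    (fun s hs => ((hder s hs).norm_sq).continuousAt.continuousWithinAt)
    (fun s hs => ((hder s (Set.mem_Icc_of_Ico hs)).norm_sq).hasDerivWithinAt)
    (by simp [h0])
    (fun s hs => by
      have hs' := Set.mem_Icc_of_Ico hs
      have h1 : ‖2 * (inner ℝ (f s) (d s) : ℝ)‖ ≤ 2 * ‖f s‖ * ‖d s‖ := by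
        rw [norm_mul, Real.norm_ofNat]
        have := abs_real_inner_le_norm (f s) (d s)
        rw [Real.norm_eq_abs]
        nlinarith
      have h2 : ‖‖f s‖ ^ 2‖ = ‖f s‖ ^ 2 := by
        rw [Real.norm_eq_abs, abs_of_nonneg (by positivity)]
      rw [h2]
      exact h1.trans (hbound s hs'))
    t ht
  have h3 : ‖f t‖ ^ 2 ≤ gronwallBound 0 K ε (t - 0) := by
    refine le_trans ?_ key
    rw [Real.norm_eq_abs]
    exact le_abs_self _
  rw [sub_zero] at h3
  exact h3.trans (gb_le hK hε ht.1 ht.2)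

set_option maxHeartbeats 1000000 in
/-- Step 2, contraction estimate: with `X̃` driven by `r̃` as in Step 1 and
`r̃'` solving the backward ODE `dr̃'_t/dt = (η_tBR⁻¹Bᵀ − Aᵀ)r̃_t − FᵀX̃_t`, `r̃'_T = 0`,
`sup_t ‖r̃'_t‖² ≤ c_T sup_t ‖r̃_t‖²`; moreover `c_T → 0` as `T → 0⁺`. -/
theorem statement6
    {n : ℕ} (hn : 1 ≤ n) (T : ℝ) (hT : 0 < T)
    (A F : EuclideanSpace ℝ (Fin n) →L[ℝ] EuclideanSpace ℝ (Fin n))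
    (b : EuclideanSpace ℝ (Fin n)) (R : ℝ) (hR : 0 < R)
    (η : ℝ → (EuclideanSpace ℝ (Fin n) →L[ℝ] EuclideanSpace ℝ (Fin n)))
    (hη : ContinuousOn η (Set.Icc 0 T))
    (rt rt' Xt : ℝ → EuclideanSpace ℝ (Fin n))
    (hrcont : ContinuousOn rt (Set.Icc 0 T))
    (hX0 : Xt 0 = 0)
    (hXode : ∀ t ∈ Set.Icc (0:ℝ) T,
      HasDerivAt Xt ((A - (Kop R b).comp (η t)) (Xt t) - Kop R b (rt t)) t)
    (hrT : rt' T = 0)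
    (hrode : ∀ t ∈ Set.Icc (0:ℝ) T,
      HasDerivAt rt' (((η t).comp (Kop R b) - ContinuousLinearMap.adjoint A) (rt t)
        - ContinuousLinearMap.adjoint F (Xt t)) t) :
    (⨆ t : Set.Icc (0:ℝ) T, ‖rt' ↑t‖ ^ 2) ≤
        cT T ‖A‖ ‖ContinuousLinearMap.adjoint A‖ ‖Kop R b‖
          (⨆ t : Set.Icc (0:ℝ) T, ‖η ↑t‖) ‖ContinuousLinearMap.adjoint F‖ *
        (⨆ t : Set.Icc (0:ℝ) T, ‖rt ↑t‖ ^ 2)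
      ∧ Tendsto (fun τ => cT τ ‖A‖ ‖ContinuousLinearMap.adjoint A‖ ‖Kop R b‖
          (⨆ t : Set.Icc (0:ℝ) T, ‖η ↑t‖) ‖ContinuousLinearMap.adjoint F‖)
          (nhdsWithin 0 (Set.Ioi 0)) (nhds 0) := by
  classical
  haveI hne : Nonempty ↥(Set.Icc (0:ℝ) T) := ⟨⟨0, ⟨le_refl 0, hT.le⟩⟩⟩
  have hconv : ∀ s ∈ Set.Icc (0:ℝ) T, T - s ∈ Set.Icc (0:ℝ) T := by
    intro s hs
    exact ⟨by linarith [hs.2], by linarith [hs.1]⟩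
  set nA := ‖A‖ with hnA
  set nAt := ‖ContinuousLinearMap.adjoint A‖ with hnAtdef
  set nK := ‖Kop R b‖ with hnK
  set nFt := ‖ContinuousLinearMap.adjoint F‖ with hnFt
  set Me := ⨆ t : Set.Icc (0:ℝ) T, ‖η ↑t‖ with hMedef
  set Mr := ⨆ t : Set.Icc (0:ℝ) T, ‖rt ↑t‖ with hMrdef
  set S2 := ⨆ t : Set.Icc (0:ℝ) T, ‖rt ↑t‖ ^ 2 with hS2def
  have hadj : nAt = nA := LinearIsometryEquiv.norm_map ContinuousLinearMap.adjoint A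
  have hnA0 : (0:ℝ) ≤ nA := norm_nonneg _
  have hnAt0 : (0:ℝ) ≤ nAt := norm_nonneg _
  have hnK0 : (0:ℝ) ≤ nK := norm_nonneg _
  have hnFt0 : (0:ℝ) ≤ nFt := norm_nonneg _
  -- sup bounds
  have hbddη : BddAbove (Set.range fun t : Set.Icc (0:ℝ) T => ‖η ↑t‖) := by
    obtain ⟨C, hC⟩ := (isCompact_Icc.image_of_continuousOn hη.norm).bddAbove
    exact ⟨C, by rintro y ⟨t, rfl⟩; exact hC ⟨↑t, t.2, rfl⟩⟩
  have hMe_le : ∀ t ∈ Set.Icc (0:ℝ) T, ‖η t‖ ≤ Me := fun t ht => le_ciSup hbddη ⟨t, ht⟩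
  have hMe0 : 0 ≤ Me := le_trans (norm_nonneg _) (hMe_le 0 ⟨le_refl _, hT.le⟩)
  have hbddr : BddAbove (Set.range fun t : Set.Icc (0:ℝ) T => ‖rt ↑t‖) := by
    obtain ⟨C, hC⟩ := (isCompact_Icc.image_of_continuousOn hrcont.norm).bddAbove
    exact ⟨C, by rintro y ⟨t, rfl⟩; exact hC ⟨↑t, t.2, rfl⟩⟩
  have hMr_le : ∀ t ∈ Set.Icc (0:ℝ) T, ‖rt t‖ ≤ Mr := fun t ht => le_ciSup hbddr ⟨t, ht⟩
  have hMr0 : 0 ≤ Mr := le_trans (norm_nonneg _) (hMr_le 0 ⟨le_refl _, hT.le⟩)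
  have hbddr2 : BddAbove (Set.range fun t : Set.Icc (0:ℝ) T => ‖rt ↑t‖ ^ 2) := by
    obtain ⟨C, hC⟩ := (isCompact_Icc.image_of_continuousOn (hrcont.norm.pow 2)).bddAbove
    exact ⟨C, by rintro y ⟨t, rfl⟩; exact hC ⟨↑t, t.2, rfl⟩⟩
  have hS2_ge : ∀ t ∈ Set.Icc (0:ℝ) T, ‖rt t‖ ^ 2 ≤ S2 := fun t ht => le_ciSup hbddr2 ⟨t, ht⟩
  have hS20 : 0 ≤ S2 := le_trans (by positivity) (hS2_ge 0 ⟨le_refl _, hT.le⟩)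
  have hMrS2 : Mr ^ 2 ≤ S2 := by
    have h1 : Mr ≤ Real.sqrt S2 := by
      apply ciSup_le
      intro t
      calc ‖rt ↑t‖ = Real.sqrt (‖rt ↑t‖ ^ 2) := (Real.sqrt_sq (norm_nonneg _)).symm
        _ ≤ Real.sqrt S2 := Real.sqrt_le_sqrt (hS2_ge ↑t t.2)
    calc Mr ^ 2 ≤ Real.sqrt S2 ^ 2 := by nlinarith
      _ = S2 := Real.sq_sqrt hS20
  clear_value nA nAt nK nFt Me Mr S2
  -- Step 1: bound ‖Xt‖²
  have hK20 : (0:ℝ) ≤ 2 * nA + (2 * Me + 1) * nK := by nlinarith [mul_nonneg hMe0 hnK0]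
  have hXsq : ∀ t ∈ Set.Icc (0:ℝ) T,
      ‖Xt t‖ ^ 2 ≤ nK * Mr ^ 2 * T * Real.exp ((2 * nA + (2 * Me + 1) * nK) * T) := by
    apply gronwall_sq hT.le hK20 (mul_nonneg hnK0 (sq_nonneg Mr)) hXode hX0
    intro t ht
    have h1 : ‖A - (Kop R b).comp (η t)‖ ≤ nA + nK * Me := by
      refine (norm_sub_le _ _).trans ?_
      have h2 : ‖(Kop R b).comp (η t)‖ ≤ nK * Me := by
        rw [hnK]
        exact (ContinuousLinearMap.opNorm_comp_le _ _).trans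
          (mul_le_mul_of_nonneg_left (hMe_le t ht) (norm_nonneg _))
      rw [hnA]
      linarith
    have hd : ‖(A - (Kop R b).comp (η t)) (Xt t) - Kop R b (rt t)‖
        ≤ (nA + nK * Me) * ‖Xt t‖ + nK * Mr := by
      refine (norm_sub_le _ _).trans ?_
      have h3 := ContinuousLinearMap.le_opNorm (A - (Kop R b).comp (η t)) (Xt t)
      have h4 : ‖Kop R b (rt t)‖ ≤ nK * ‖rt t‖ := by
        rw [hnK]; exact ContinuousLinearMap.le_opNorm _ _
      have h5 := hMr_le t ht
      nlinarith [norm_nonneg (Xt t), norm_nonneg (rt t),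
        mul_le_mul_of_nonneg_right h1 (norm_nonneg (Xt t)),
        mul_le_mul_of_nonneg_left h5 hnK0]
    have h2X : (0:ℝ) ≤ 2 * ‖Xt t‖ := by positivity
    nlinarith [mul_le_mul_of_nonneg_left hd h2X,
      mul_nonneg hnK0 (sq_nonneg (‖Xt t‖ - Mr))]
  have hXB0 : (0:ℝ) ≤ nK * Mr ^ 2 * T * Real.exp ((2 * nA + (2 * Me + 1) * nK) * T) :=
    mul_nonneg (mul_nonneg (mul_nonneg hnK0 (sq_nonneg Mr)) hT.le) (Real.exp_pos _).le
  -- Step 2: backward bound on ‖rt'‖²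
  have hK10 : (0:ℝ) ≤ nAt + Me * nK + nFt := by nlinarith [mul_nonneg hMe0 hnK0]
  have hε10 : (0:ℝ) ≤ (nAt + Me * nK) * Mr ^ 2
      + nFt * (nK * Mr ^ 2 * T * Real.exp ((2 * nA + (2 * Me + 1) * nK) * T)) :=
    add_nonneg
      (mul_nonneg (by nlinarith [mul_nonneg hMe0 hnK0]) (sq_nonneg Mr))
      (mul_nonneg hnFt0 hXB0)
  have hrsq : ∀ s ∈ Set.Icc (0:ℝ) T,
      ‖rt' (T - s)‖ ^ 2 ≤ ((nAt + Me * nK) * Mr ^ 2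
          + nFt * (nK * Mr ^ 2 * T * Real.exp ((2 * nA + (2 * Me + 1) * nK) * T))) * T
        * Real.exp ((nAt + Me * nK + nFt) * T) := by
    apply gronwall_sq (f := fun s => rt' (T - s))
      (d := fun s => -((((η (T - s)).comp (Kop R b) - ContinuousLinearMap.adjoint A) (rt (T - s)))
        - ContinuousLinearMap.adjoint F (Xt (T - s))))
      hT.le hK10 hε10
    · intro s hs
      have h := hrode (T - s) (hconv s hs)
      have hTs : HasDerivAt (fun s : ℝ => T - s) (-1 : ℝ) s := by
        simpa using (hasDerivAt_id s).const_sub T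
      have hcomp := HasDerivAt.scomp (h := fun s : ℝ => T - s) (x := s) h hTs
      simpa [Function.comp_def, neg_one_smul] using hcomp
    · simpa using hrT
    · intro s hs
      have hu := hconv s hs
      have h1 : ‖(η (T - s)).comp (Kop R b) - ContinuousLinearMap.adjoint A‖
          ≤ Me * nK + nAt := by
        refine (norm_sub_le _ _).trans ?_
        have h2 : ‖(η (T - s)).comp (Kop R b)‖ ≤ Me * nK := by
          rw [hnK]
          exact (ContinuousLinearMap.opNorm_comp_le _ _).trans
            (mul_le_mul_of_nonneg_right (hMe_le _ hu) (norm_nonneg _))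
        rw [hnAtdef]
        linarith
      have hd : ‖-((((η (T - s)).comp (Kop R b) - ContinuousLinearMap.adjoint A) (rt (T - s)))
          - ContinuousLinearMap.adjoint F (Xt (T - s)))‖
          ≤ (Me * nK + nAt) * Mr + nFt * ‖Xt (T - s)‖ := by
        rw [norm_neg]
        refine (norm_sub_le _ _).trans ?_
        have h3 := ContinuousLinearMap.le_opNorm
          ((η (T - s)).comp (Kop R b) - ContinuousLinearMap.adjoint A) (rt (T - s))
        have h4 : ‖ContinuousLinearMap.adjoint F (Xt (T - s))‖ ≤ nFt * ‖Xt (T - s)‖ := by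
          rw [hnFt]; exact ContinuousLinearMap.le_opNorm _ _
        have h5 := hMr_le _ hu
        have h6 : (0:ℝ) ≤ Me * nK + nAt := by nlinarith [mul_nonneg hMe0 hnK0]
        nlinarith [norm_nonneg (rt (T - s)), norm_nonneg (Xt (T - s)),
          mul_le_mul_of_nonneg_right h1 (norm_nonneg (rt (T - s))),
          mul_le_mul_of_nonneg_left h5 h6]
      have hXu := hXsq _ hu
      have h2g : (0:ℝ) ≤ 2 * ‖rt' (T - s)‖ := by positivity
      have h6 : (0:ℝ) ≤ Me * nK + nAt := by nlinarith [mul_nonneg hMe0 hnK0]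
      nlinarith [mul_le_mul_of_nonneg_left hd h2g,
        mul_nonneg h6 (sq_nonneg (‖rt' (T - s)‖ - Mr)),
        mul_nonneg hnFt0 (sq_nonneg (‖rt' (T - s)‖ - ‖Xt (T - s)‖)),
        mul_le_mul_of_nonneg_left hXu hnFt0]
  -- assembling
  have eA : T * (nA + nK * Me + nFt) = (nAt + Me * nK + nFt) * T := by rw [hadj]; ring
  have eB : T * (2 * nA + (2 * Me + 1) * nK) = (2 * nA + (2 * Me + 1) * nK) * T := by ring
  have hcT : cT T nA nAt nK Me nFt
      = T * Real.exp ((nAt + Me * nK + nFt) * T)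
        * (nAt + (Me + T * nFt * Real.exp ((2 * nA + (2 * Me + 1) * nK) * T)) * nK) := by
    simp only [cT, eA, eB]
  have hC0 : (0:ℝ) ≤ nAt + (Me + T * nFt * Real.exp ((2 * nA + (2 * Me + 1) * nK) * T)) * nK :=
    add_nonneg hnAt0 (mul_nonneg (add_nonneg hMe0 (mul_nonneg (mul_nonneg hT.le hnFt0)
      (Real.exp_pos _).le)) hnK0)
  constructor
  · apply ciSup_le
    intro t
    have ht := t.2
    have h1 := hrsq (T - ↑t) ⟨by linarith [ht.2], by linarith [ht.1]⟩
    rw [sub_sub_cancel] at h1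
    refine h1.trans ?_
    rw [hcT]
    have hcoeff : (nAt + Me * nK) * Mr ^ 2
        + nFt * (nK * Mr ^ 2 * T * Real.exp ((2 * nA + (2 * Me + 1) * nK) * T))
        = (nAt + (Me + T * nFt * Real.exp ((2 * nA + (2 * Me + 1) * nK) * T)) * nK) * Mr ^ 2 := by
      ring
    rw [hcoeff]
    nlinarith [mul_nonneg (mul_nonneg (mul_nonneg hC0 hT.le)
      (Real.exp_pos ((nAt + Me * nK + nFt) * T)).le) (sub_nonneg.2 hMrS2)]
  · have hc : Continuous (fun τ => cT τ nA nAt nK Me nFt) := by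
      simp only [cT]; fun_prop
    have h0 : cT 0 nA nAt nK Me nFt = 0 := by simp [cT]
    have h1 : Tendsto (fun τ => cT τ nA nAt nK Me nFt) (nhdsWithin 0 (Set.Ioi 0))
        (nhds (cT 0 nA nAt nK Me nFt)) :=
      (hc.tendsto 0).mono_left nhdsWithin_le_nhds
    rwa [h0] at h1

end
end

section
/- Let X̄ : [0,T] → ℝⁿ with X̄₀ fixed. If u(t,X) = (1/2)Xᵀη_tX + Xᵀr_t + s_t where (η, r, s) solve the MFC system (Riccati equation for η; −dr_t/dt = (Aᵀ − η_tBR⁻¹Bᵀ)r_t + η_tC_t + H_t + FᵀX̄_t + FX̄_t, r_T = 0; s as in the MFG case), then u solves the MFC master HJB equation −∂_t u − tr(a D²u) = Ĥ(t, X, X̄_t, Du) + XᵀFX̄_t with terminal condition u(T,X) = XᵀS_TX + p₂R_e, where Ĥ is the reduced Hamiltonian. -/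
open Matrix intervalIntegral

lemma aux_symm_dot {n : ℕ} (M : Matrix (Fin n) (Fin n) ℝ) (hM : Mᵀ = M)
    (v w : Fin n → ℝ) : v ⬝ᵥ M *ᵥ w = M *ᵥ v ⬝ᵥ w := by
  rw [Matrix.dotProduct_mulVec, ← Matrix.mulVec_transpose, hM]

lemma aux_transpose_dot {n : ℕ} (M : Matrix (Fin n) (Fin n) ℝ)
    (v w : Fin n → ℝ) : v ⬝ᵥ Mᵀ *ᵥ w = M *ᵥ v ⬝ᵥ w := by
  rw [Matrix.dotProduct_mulVec, Matrix.vecMul_transpose]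

/-- verification for the MFC problem. If `η` solves the Riccati equation
with `η_T = 2S_T`, `r` solves the MFC linear ODE (with the extra `FX̄` term) with
`r_T = 0`, and `s_t = p₂R_e + ∫_t^T (tr(aη_u) − ½r_uᵀBR⁻¹Bᵀr_u + C_uᵀr_u + J_u)du`,
then `u(t,X) = ½XᵀηₜX + Xᵀrₜ + sₜ` solves the MFC master HJB equation
`−∂ₜu − tr(a D²u) = Ĥ(t,X,X̄ₜ,Du) + XᵀFX̄ₜ` with `u(T,X) = XᵀS_TX + p₂R_e`. -/
theorem statement11
    {n : ℕ} (hn : 1 ≤ n) (T : ℝ) (hT : 0 < T)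
    (A F G a ST : Matrix (Fin n) (Fin n) ℝ) (hG : G.IsSymm) (hST : ST.IsSymm)
    (B : Fin n → ℝ) (R : ℝ) (hR : 0 < R) (p₂ Re : ℝ)
    (C H : ℝ → Fin n → ℝ) (Xbar : ℝ → Fin n → ℝ) (J : ℝ → ℝ)
    (hC : Continuous C) (hH : Continuous H) (hXbar : Continuous Xbar) (hJ : Continuous J)
    (η : ℝ → Matrix (Fin n) (Fin n) ℝ) (r : ℝ → Fin n → ℝ) (s : ℝ → ℝ)
    (hηsymm : ∀ t, (η t).IsSymm) (hηcont : Continuous η) (hrcont : Continuous r)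
    -- Riccati equation for η with terminal condition η_T = 2S_T
    (hηode : ∀ t ∈ Set.Icc (0:ℝ) T, ∀ i j, HasDerivAt (fun u => η u i j)
      ((η t * (R⁻¹ • Matrix.vecMulVec B B) * η t - Aᵀ * η t - η t * A - (2:ℝ) • G) i j) t)
    (hηT : η T = (2:ℝ) • ST)
    -- MFC ODE for r: −dr/dt = (Aᵀ − ηBR⁻¹Bᵀ)r + ηC + H + FᵀX̄ + FX̄, r_T = 0
    (hrode : ∀ t ∈ Set.Icc (0:ℝ) T, ∀ i, HasDerivAt (fun u => r u i)
      (-((Aᵀ - η t * (R⁻¹ • Matrix.vecMulVec B B)).mulVec (r t)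
        + (η t).mulVec (C t) + H t + Fᵀ.mulVec (Xbar t) + F.mulVec (Xbar t)) i) t)
    (hrT : r T = 0)
    -- s as in the MFG case
    (hs : ∀ t, s t = p₂ * Re + ∫ u in t..T,
      ((a * η u).trace - (1/2) * (r u ⬝ᵥ ((R⁻¹ • Matrix.vecMulVec B B).mulVec (r u)))
        + C u ⬝ᵥ r u + J u)) :
    -- u solves the MFC master HJB equation, with the correct terminal condition
    (∀ t ∈ Set.Icc (0:ℝ) T, ∀ X : Fin n → ℝ, ∃ du : ℝ,
      HasDerivAt (fun u => (1/2) * (X ⬝ᵥ ((η u).mulVec X)) + X ⬝ᵥ r u + s u) du t ∧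
      -du - (a * η t).trace =
        -(1/2) * (((η t).mulVec X + r t) ⬝ᵥ
            ((R⁻¹ • Matrix.vecMulVec B B).mulVec ((η t).mulVec X + r t)))
          + X ⬝ᵥ (Aᵀ.mulVec ((η t).mulVec X + r t))
          + C t ⬝ᵥ ((η t).mulVec X + r t)
          + H t ⬝ᵥ X + Xbar t ⬝ᵥ (F.mulVec X) + X ⬝ᵥ (G.mulVec X) + J t
          + X ⬝ᵥ (F.mulVec (Xbar t)))
    ∧ (∀ X : Fin n → ℝ,
        (1/2) * (X ⬝ᵥ ((η T).mulVec X)) + X ⬝ᵥ r T + s T =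
          X ⬝ᵥ (ST.mulVec X) + p₂ * Re) := by
  set Q : Matrix (Fin n) (Fin n) ℝ := R⁻¹ • Matrix.vecMulVec B B with hQdef
  have hQsymm : Qᵀ = Q := by
    ext i j
    simp [hQdef, Matrix.transpose_apply, Matrix.vecMulVec_apply, mul_comm]
  -- continuity of the integrand of s
  have hf : Continuous (fun u => (a * η u).trace
      - (1/2) * (r u ⬝ᵥ Q.mulVec (r u)) + C u ⬝ᵥ r u + J u) := by
    refine ((((continuous_const.matrix_mul hηcont).matrix_trace).sub
      (continuous_const.mul (hrcont.dotProduct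
        (continuous_const.matrix_mulVec hrcont)))).add
      (hC.dotProduct hrcont)).add hJ
  constructor
  · intro t ht X
    -- derivative of s
    have hds : HasDerivAt s (-((a * η t).trace
        - (1/2) * (r t ⬝ᵥ Q.mulVec (r t)) + C t ⬝ᵥ r t + J t)) t := by
      have hg := (hf.integral_hasStrictDerivAt T t).hasDerivAt
      have hseq : s = fun t => p₂ * Re + -∫ u in T..t,
          ((a * η u).trace - (1/2) * (r u ⬝ᵥ Q.mulVec (r u)) + C u ⬝ᵥ r u + J u) := by
        funext t
        rw [hs t, intervalIntegral.integral_symm]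
      rw [hseq]
      exact (hg.neg).const_add _
    -- derivative of the quadratic part
    have hq : HasDerivAt (fun u => X ⬝ᵥ (η u).mulVec X)
        (X ⬝ᵥ (η t * Q * η t - Aᵀ * η t - η t * A - (2:ℝ) • G).mulVec X) t := by
      simp only [Matrix.mulVec, dotProduct]
      exact HasDerivAt.fun_sum fun i _ => HasDerivAt.const_mul _
        (HasDerivAt.fun_sum fun j _ => (hηode t ht i j).mul_const _)
    -- derivative of the linear part
    have hl : HasDerivAt (fun u => X ⬝ᵥ r u)
        (X ⬝ᵥ (-((Aᵀ - η t * Q).mulVec (r t) + (η t).mulVec (C t) + H t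
          + Fᵀ.mulVec (Xbar t) + F.mulVec (Xbar t)))) t := by
      simp only [dotProduct]
      exact HasDerivAt.fun_sum fun i _ => HasDerivAt.const_mul _ (hrode t ht i)
    refine ⟨_, ((hq.const_mul (1/2 : ℝ)).add hl).add hds, ?_⟩
    have hη := hηsymm t
    have h1 : X ⬝ᵥ (η t) *ᵥ (Q *ᵥ ((η t) *ᵥ X)) = ((η t) *ᵥ X) ⬝ᵥ Q *ᵥ ((η t) *ᵥ X) :=
      aux_symm_dot _ hη _ _
    have h2 : X ⬝ᵥ (η t) *ᵥ (A *ᵥ X) = X ⬝ᵥ Aᵀ *ᵥ ((η t) *ᵥ X) := by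
      rw [aux_symm_dot _ hη, aux_transpose_dot, dotProduct_comm]
    have h3 : X ⬝ᵥ (η t) *ᵥ (Q *ᵥ r t) = ((η t) *ᵥ X) ⬝ᵥ Q *ᵥ r t :=
      aux_symm_dot _ hη _ _
    have h3' : r t ⬝ᵥ Q *ᵥ ((η t) *ᵥ X) = ((η t) *ᵥ X) ⬝ᵥ Q *ᵥ r t := by
      rw [aux_symm_dot _ hQsymm, dotProduct_comm]
    have h4 : X ⬝ᵥ (η t) *ᵥ C t = C t ⬝ᵥ ((η t) *ᵥ X) := by
      rw [aux_symm_dot _ hη, dotProduct_comm]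
    have h5 : X ⬝ᵥ H t = H t ⬝ᵥ X := dotProduct_comm _ _
    have h6 : X ⬝ᵥ Fᵀ *ᵥ Xbar t = Xbar t ⬝ᵥ F *ᵥ X := by
      rw [aux_transpose_dot, dotProduct_comm]
    simp only [Matrix.sub_mulVec, Matrix.add_mulVec, Matrix.mulVec_add,
      dotProduct_add, add_dotProduct, dotProduct_sub,
      sub_dotProduct, dotProduct_neg, neg_dotProduct,
      Matrix.smul_mulVec, dotProduct_smul, smul_eq_mul,
      ← Matrix.mulVec_mulVec]
    rw [h1, h2, h3, h3', h4, h5, h6]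
    ring
  · intro X
    rw [hrT, hηT, hs T, intervalIntegral.integral_same]
    simp [Matrix.smul_mulVec, dotProduct_smul, smul_eq_mul]
end
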